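/- arXiv:1206.3826 — 6 statements merged into one kernel-verified Lean document; each statement's English description precedes it below -/
import Mathlib

section
/- For integers k, m ≥ 0 and real x, ∫₀ˣ B_k(z)·B_m(z) dz = (k! m!)/((k+m+1)!) · ∑_{j=0}^{k} (-1)^j · C(k+m+1, k-j) · (B_{k-j}(x)·B_{m+j+1}(x) - B_{k-j}·B_{m+j+1}), where C(n,r) denotes a binomial coefficient. -/
/-- The `k`-th Bernoulli polynomial evaluated at a real `x`. -/
noncomputable def B (k : ℕ) (x : ℝ) : ℝ :=
  Polynomial.aeval x (Polynomial.bernoulli k)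

lemma B_eq (k : ℕ) : B k = bernoulliFun k := by
  funext x
  rw [B, bernoulliFun, Polynomial.aeval_def, Polynomial.eval_map]

lemma hasDerivAt_B (k : ℕ) (x : ℝ) : HasDerivAt (B k) (↑k * B (k - 1) x) x := by
  rw [B_eq, B_eq]; exact hasDerivAt_bernoulliFun k x

lemma key_sum (k : ℕ) : ∀ (m : ℕ) (b : ℕ → ℝ),
    ∑ j ∈ Finset.range (k + 1),
      (-1 : ℝ) ^ j * ((k + m + 1).choose (k - j)) *
        (((k - j : ℕ) : ℝ) * b (k - j - 1) * b (m + j + 1)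
          + b (k - j) * (((m + j + 1 : ℕ) : ℝ) * b (m + j)))
    = ((k + m + 1).choose k : ℝ) * (m + 1) * (b k * b m) := by
  induction k with
  | zero =>
    intro m b
    norm_num
    ring
  | succ k ih =>
    intro m b
    rw [Finset.sum_range_succ']
    have h1 : ∑ j ∈ Finset.range (k + 1),
        (-1 : ℝ) ^ (j + 1) * ((k + 1 + m + 1).choose (k + 1 - (j + 1))) *
          (((k + 1 - (j + 1) : ℕ) : ℝ) * b (k + 1 - (j + 1) - 1) * b (m + (j + 1) + 1)
            + b (k + 1 - (j + 1)) * (((m + (j + 1) + 1 : ℕ) : ℝ) * b (m + (j + 1)))) =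
        -∑ j ∈ Finset.range (k + 1),
          (-1 : ℝ) ^ j * ((k + (m + 1) + 1).choose (k - j)) *
            (((k - j : ℕ) : ℝ) * b (k - j - 1) * b ((m + 1) + j + 1)
              + b (k - j) * ((((m + 1) + j + 1 : ℕ) : ℝ) * b ((m + 1) + j))) := by
      rw [← Finset.sum_neg_distrib]
      refine Finset.sum_congr rfl fun j _ => ?_
      have e1 : k + 1 - (j + 1) = k - j := by omega
      have e2 : k + 1 + m + 1 = k + (m + 1) + 1 := by ring
      have e3 : m + (j + 1) + 1 = (m + 1) + j + 1 := by ring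
      have e4 : m + (j + 1) = (m + 1) + j := by ring
      rw [e1, e2, e3, e4]
      ring
    rw [h1, ih (m + 1) b]
    have hc : ((k + m + 2).choose (k + 1) : ℝ) * (k + 1) = ((k + m + 2).choose k) * (m + 2) := by
      have := Nat.choose_succ_right_eq (k + m + 2) k
      have h2 : k + m + 2 - k = m + 2 := by omega
      rw [h2] at this
      exact_mod_cast this
    have e5 : k + (m + 1) + 1 = k + m + 2 := by ring
    have e6 : k + 1 + m + 1 = k + m + 2 := by ring
    rw [e5, e6]
    simp only [Nat.sub_zero, pow_zero, Nat.add_zero, Nat.add_sub_cancel]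
    push_cast
    linear_combination hc * (b k * b (m + 1))

theorem integral_prod_two_bernoulli_poly (k m : ℕ) (x : ℝ) :
    ∫ z in (0:ℝ)..x, B k z * B m z =
      ((k.factorial : ℝ) * m.factorial / (k + m + 1).factorial) *
        ∑ j ∈ Finset.range (k + 1),
          (-1 : ℝ) ^ j * ((k + m + 1).choose (k - j)) *
            (B (k - j) x * B (m + j + 1) x - B (k - j) 0 * B (m + j + 1) 0) := by
  set c : ℝ := (k.factorial : ℝ) * m.factorial / (k + m + 1).factorial with hc
  set G : ℝ → ℝ := fun y => c * ∑ j ∈ Finset.range (k + 1),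
      (-1 : ℝ) ^ j * ((k + m + 1).choose (k - j)) * (B (k - j) y * B (m + j + 1) y) with hG
  have hfac : ((k + m + 1).factorial : ℝ) ≠ 0 := by positivity
  have hcC : c * (((k + m + 1).choose k : ℝ) * (m + 1)) = 1 := by
    have h := Nat.choose_mul_factorial_mul_factorial (show k ≤ k + m + 1 by omega)
    have h2 : k + m + 1 - k = m + 1 := by omega
    rw [h2] at h
    have h3 : ((k + m + 1).choose k : ℝ) * k.factorial * (m + 1).factorial
        = (k + m + 1).factorial := by exact_mod_cast h
    rw [hc]
    field_simp
    rw [← h3, Nat.factorial_succ]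
    push_cast
    ring
  have hderiv : ∀ z ∈ Set.uIcc (0:ℝ) x, HasDerivAt G (B k z * B m z) z := by
    intro z _
    have hterm : ∀ j ∈ Finset.range (k + 1), HasDerivAt
        (fun y => (-1 : ℝ) ^ j * ((k + m + 1).choose (k - j)) * (B (k - j) y * B (m + j + 1) y))
        ((-1 : ℝ) ^ j * ((k + m + 1).choose (k - j)) *
          (((k - j : ℕ) : ℝ) * B (k - j - 1) z * B (m + j + 1) z
            + B (k - j) z * (((m + j + 1 : ℕ) : ℝ) * B (m + j) z))) z := by
      intro j _
      have h1 := (hasDerivAt_B (k - j) z).mul (hasDerivAt_B (m + j + 1) z)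
      have e : m + j + 1 - 1 = m + j := by omega
      rw [e] at h1
      exact (h1.const_mul _).congr_deriv (by push_cast; ring)
    have hsum := HasDerivAt.sum hterm
    have := hsum.const_mul c
    rw [hG]
    convert this using 1
    case e'_4 => rfl
    case e'_5 => rfl
    case e'_8 => ext y; rw [Finset.sum_apply]
    rw [key_sum k m (fun i => B i z)]
    linear_combination -(B k z * B m z) * hcC
  have hint : IntervalIntegrable (fun z => B k z * B m z) MeasureTheory.volume 0 x := by
    apply Continuous.intervalIntegrable
    rw [B_eq, B_eq]
    exact (Polynomial.continuous _).mul (Polynomial.continuous _)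
  rw [intervalIntegral.integral_eq_sub_of_hasDerivAt hderiv hint, hG]
  rw [← mul_sub, ← Finset.sum_sub_distrib]
  congr 1
  refine Finset.sum_congr rfl fun j _ => ?_
  ring
end

section
/- Let r ≥ 1 and k_1, …, k_r ≥ 0 be integers and x a real number. Define Ĩ_{k_1,…,k_r}(x) = (1/(k_1!⋯k_r!)) ∫₀ˣ B_{k_1}(z)⋯B_{k_r}(z) dz and C̃_{k_1,…,k_r}(x) = (1/(k_1!⋯k_r!)) (B_{k_1}(x)⋯B_{k_r}(x) − B_{k_1}⋯B_{k_r}), with the convention that C̃ is zero whenever a factorial has a negative argument. Then Ĩ_{k_1,…,k_r}(x) = ∑_{a=0}^{k_1+⋯+k_{r-1}} (-1)^a ∑_{i_1+⋯+i_{r-1}=a, i_j ≥ 0} binom(a; i_1,…,i_{r-1}) · C̃_{k_1−i_1, …, k_{r-1}−i_{r-1}, k_r+a+1}(x), where binom(a; i_1,…,i_{r-1}) = a!/(i_1!⋯i_{r-1}!) is the multinomial coefficient. -/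
/-- `C̃_{k_1,…,k_r}(x)`: the normalized product-difference of Bernoulli polynomials,
set to `0` whenever some index is negative. -/
noncomputable def Ct {r : ℕ} (k : Fin r → ℤ) (x : ℝ) : ℝ :=
  if ∀ j, 0 ≤ k j then
    (∏ j, B (k j).toNat x - ∏ j, B (k j).toNat 0) /
      ∏ j, ((k j).toNat.factorial : ℝ)
  else 0

/-- `Ĩ_{k_1,…,k_r}(x)`: the normalized integral of a product of Bernoulli polynomials. -/
noncomputable def It {r : ℕ} (k : Fin r → ℕ) (x : ℝ) : ℝ :=
  (∫ z in (0:ℝ)..x, ∏ j, B (k j) z) / ∏ j, ((k j).factorial : ℝ)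

noncomputable def c (n : ℤ) (z : ℝ) : ℝ :=
  if 0 ≤ n then B n.toNat z / n.toNat.factorial else 0

lemma c_neg {n : ℤ} (h : n < 0) (z : ℝ) : c n z = 0 := by
  simp [c]; omega

lemma c_nonneg {n : ℤ} (h : 0 ≤ n) (z : ℝ) :
    c n z = B n.toNat z / n.toNat.factorial := by
  simp [c, h]

lemma B_eq_s6 (k : ℕ) :
    B k = fun x => Polynomial.eval x ((Polynomial.bernoulli k).map (algebraMap ℚ ℝ)) := by
  funext x
  simp only [B, Polynomial.aeval_def, Polynomial.eval₂_eq_eval_map]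

lemma B_hasDerivAt (k : ℕ) (z : ℝ) : HasDerivAt (B k) ((k : ℝ) * B (k-1) z) z := by
  rw [B_eq_s6]
  have := Polynomial.hasDerivAt ((Polynomial.bernoulli k).map (algebraMap ℚ ℝ)) z
  refine this.congr_deriv ?_
  rw [Polynomial.derivative_map, Polynomial.derivative_bernoulli k]
  rw [B_eq_s6]
  simp [Polynomial.eval_map]

lemma B_continuous (k : ℕ) : Continuous (B k) :=
  (Polynomial.bernoulli k).continuous_aeval

lemma c_hasDerivAt (n : ℤ) (z : ℝ) : HasDerivAt (c n) (c (n-1) z) z := by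
  rcases lt_trichotomy n 0 with h | h | h
  · have : c n = fun _ => (0:ℝ) := by funext y; simp [c, not_le.mpr h]
    rw [this]
    have : c (n-1) z = 0 := by simp [c]; omega
    rw [this]; exact hasDerivAt_const _ _
  · subst h
    have : c 0 = fun _ => (1:ℝ) := by
      funext y; simp [c, B, Polynomial.bernoulli_zero]
    rw [this]
    have : c (0-1) z = 0 := by simp [c]
    rw [this]; exact hasDerivAt_const _ _
  · have hn : n.toNat = (n-1).toNat + 1 := by omega
    have : c n = fun y => B ((n-1).toNat + 1) y / ((n-1).toNat + 1).factorial := by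
      funext y; simp only [c, if_pos h.le, hn]
    rw [this]
    have h2 : c (n-1) z = B (n-1).toNat z / (n-1).toNat.factorial := by
      simp only [c, if_pos (by omega : (0:ℤ) ≤ n - 1)]
    rw [h2]
    have := (B_hasDerivAt ((n-1).toNat + 1) z).div_const (((n-1).toNat + 1).factorial : ℝ)
    refine this.congr_deriv ?_
    rw [Nat.add_sub_cancel, Nat.factorial_succ]
    push_cast
    have h3 : ((n-1).toNat.factorial : ℝ) ≠ 0 := Nat.cast_ne_zero.mpr (Nat.factorial_ne_zero _)
    field_simp

lemma c_continuous (n : ℤ) : Continuous (c n) := by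
  unfold c
  split
  · exact (B_continuous _).div_const _
  · exact continuous_const

open Finset

lemma mult_cast {r a : ℕ} (i : Fin r → ℕ) (h : i ∈ Finset.Nat.antidiagonalTuple r a) :
    (Nat.multinomial Finset.univ i : ℝ) = (a.factorial : ℝ) / ∏ j, ((i j).factorial : ℝ) := by
  have hs : ∑ j, i j = a := Finset.Nat.mem_antidiagonalTuple.mp h
  have hspec := Nat.multinomial_spec Finset.univ i
  rw [hs] at hspec
  have hne : (∏ j, ((i j).factorial : ℝ)) ≠ 0 := by
    apply Finset.prod_ne_zero_iff.mpr
    intro j _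
    exact_mod_cast Nat.factorial_ne_zero _
  field_simp
  rw [mul_comm]
  exact_mod_cast congrArg (Nat.cast : ℕ → ℝ) hspec

lemma prod_comp_update {r : ℕ} {M : Type*} [CommMonoid M] (f : Fin r → ℕ → M)
    (i : Fin r → ℕ) (l : Fin r) (v : ℕ) :
    ∏ j, f j (Function.update i l v j) = f l v * ∏ j ∈ Finset.univ.erase l, f j (i j) := by
  have h : (fun j => f j (Function.update i l v j)) =
      Function.update (fun j => f j (i j)) l (f l v) := by
    funext j
    by_cases h : j = l
    · subst h; simp
    · simp [Function.update_of_ne h]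
  rw [h, Finset.prod_update_of_mem (Finset.mem_univ l), Finset.erase_eq]

lemma step {r : ℕ} (l : Fin r) (a : ℕ) (f : (Fin r → ℕ) → ℝ) :
    ∑ i ∈ Finset.Nat.antidiagonalTuple r a,
      ((a.factorial : ℝ) / ∏ j, ((i j).factorial : ℝ)) * f (Function.update i l (i l + 1))
    = ∑ i ∈ Finset.Nat.antidiagonalTuple r (a+1),
      ((a.factorial : ℝ) * (i l) / ∏ j, ((i j).factorial : ℝ)) * f i := by
  conv_rhs => rw [← Finset.sum_filter_of_ne (p := fun i => i l ≠ 0)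
    (by intro x _ hx; by_contra h; simp [h] at hx)]
  refine Finset.sum_nbij' (fun i => Function.update i l (i l + 1))
    (fun i => Function.update i l (i l - 1)) ?_ ?_ ?_ ?_ ?_
  · intro i hi
    rw [Finset.mem_filter]
    refine ⟨?_, by simp⟩
    rw [Finset.Nat.mem_antidiagonalTuple] at hi ⊢
    rw [Finset.sum_update_of_mem (Finset.mem_univ l)]
    have h1 := Finset.add_sum_erase Finset.univ i (Finset.mem_univ l)
    simp only [Finset.erase_eq] at h1
    omega
  · intro i hi
    rw [Finset.mem_filter] at hi
    obtain ⟨hi, hl⟩ := hi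
    rw [Finset.Nat.mem_antidiagonalTuple] at hi ⊢
    rw [Finset.sum_update_of_mem (Finset.mem_univ l)]
    have h1 := Finset.add_sum_erase Finset.univ i (Finset.mem_univ l)
    simp only [Finset.erase_eq] at h1
    omega
  · intro i _
    funext j
    by_cases h : j = l
    · subst h; simp
    · simp [Function.update_of_ne h]
  · intro i hi
    rw [Finset.mem_filter] at hi
    have hl : i l ≠ 0 := hi.2
    funext j
    by_cases h : j = l
    · subst h; simp; omega
    · simp [Function.update_of_ne h]
  · intro i hi
    congr 1
    simp only [Function.update_self]
    have hprod : ∏ j, (((Function.update i l (i l + 1)) j).factorial : ℝ)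
        = ((i l : ℝ) + 1) * ∏ j, ((i j).factorial : ℝ) := by
      rw [prod_comp_update (fun j n => ((n.factorial : ℝ) : ℝ)) i l (i l + 1)]
      rw [← Finset.mul_prod_erase _ (fun j => ((i j).factorial : ℝ)) (Finset.mem_univ l)]
      rw [Nat.factorial_succ]
      push_cast
      ring
    rw [hprod]
    have hne : (∏ j, ((i j).factorial : ℝ)) ≠ 0 := by
      apply Finset.prod_ne_zero_iff.mpr
      intro j _; exact_mod_cast Nat.factorial_ne_zero _
    push_cast
    field_simp

noncomputable def P {r : ℕ} (kf : Fin r → ℕ) (i : Fin r → ℕ) (z : ℝ) : ℝ :=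
  ∏ j, c ((kf j : ℤ) - i j) z

noncomputable def G {r : ℕ} (kf : Fin r → ℕ) (a : ℕ) (z : ℝ) : ℝ :=
  ∑ i ∈ Finset.Nat.antidiagonalTuple r a, (Nat.multinomial Finset.univ i : ℝ) * P kf i z

lemma P_continuous {r : ℕ} (kf i : Fin r → ℕ) : Continuous (P kf i) := by
  unfold P
  exact continuous_finset_prod _ (fun j _ => c_continuous _)

lemma G_continuous {r : ℕ} (kf : Fin r → ℕ) (a : ℕ) : Continuous (G kf a) := by
  unfold G
  exact continuous_finset_sum _ (fun i _ => continuous_const.mul (P_continuous kf i))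

lemma P_update {r : ℕ} (kf i : Fin r → ℕ) (l : Fin r) (z : ℝ) :
    P kf (Function.update i l (i l + 1)) z
      = c ((kf l : ℤ) - i l - 1) z * ∏ j ∈ Finset.univ.erase l, c ((kf j : ℤ) - i j) z := by
  unfold P
  rw [prod_comp_update (fun j n => c ((kf j : ℤ) - n) z) i l (i l + 1)]
  congr 2
  push_cast
  ring

lemma G_hasDerivAt {r : ℕ} (kf : Fin r → ℕ) (a : ℕ) (z : ℝ) :
    HasDerivAt (G kf a) (G kf (a+1) z) z := by
  have hterm : ∀ i ∈ Finset.Nat.antidiagonalTuple r a,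
      HasDerivAt (fun z => (Nat.multinomial Finset.univ i : ℝ) * P kf i z)
        ((Nat.multinomial Finset.univ i : ℝ) *
          ∑ l, (∏ j ∈ Finset.univ.erase l, c ((kf j : ℤ) - i j) z) * c ((kf l : ℤ) - i l - 1) z)
        z := by
    intro i _
    refine HasDerivAt.const_mul _ ?_
    have := HasDerivAt.finset_prod (u := Finset.univ)
      (f := fun j w => c ((kf j : ℤ) - i j) w)
      (f' := fun j => c ((kf j : ℤ) - i j - 1) z)
      (x := z) (fun j _ => c_hasDerivAt _ z)
    simp only [smul_eq_mul, Finset.prod_fn] at this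
    exact this
  have hG := HasDerivAt.sum hterm
  have hGfun : (fun z => ∑ i ∈ Finset.Nat.antidiagonalTuple r a,
      (Nat.multinomial Finset.univ i : ℝ) * P kf i z) = G kf a := rfl
  simp only [Finset.sum_fn] at hG
  rw [hGfun] at hG
  refine hG.congr_deriv ?_
  rw [Finset.sum_congr rfl (fun i hi => by rw [mult_cast i hi])]
  calc ∑ i ∈ Finset.Nat.antidiagonalTuple r a,
        ((a.factorial : ℝ) / ∏ j, ((i j).factorial : ℝ)) *
          ∑ l, (∏ j ∈ Finset.univ.erase l, c ((kf j : ℤ) - i j) z) * c ((kf l : ℤ) - i l - 1) z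
      = ∑ l, ∑ i ∈ Finset.Nat.antidiagonalTuple r a,
          ((a.factorial : ℝ) / ∏ j, ((i j).factorial : ℝ)) *
            P kf (Function.update i l (i l + 1)) z := by
        rw [Finset.sum_comm]
        refine Finset.sum_congr rfl (fun i hi => ?_)
        rw [Finset.mul_sum]
        refine Finset.sum_congr rfl (fun l _ => ?_)
        rw [P_update]
        ring
    _ = ∑ l, ∑ i ∈ Finset.Nat.antidiagonalTuple r (a+1),
          ((a.factorial : ℝ) * (i l) / ∏ j, ((i j).factorial : ℝ)) * P kf i z := by
        refine Finset.sum_congr rfl (fun l _ => ?_)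
        exact step l a (fun i => P kf i z)
    _ = G kf (a+1) z := by
        rw [Finset.sum_comm]
        unfold G
        refine Finset.sum_congr rfl (fun i hi => ?_)
        rw [mult_cast i hi, ← Finset.sum_mul, ← Finset.sum_div]
        congr 2
        rw [← Finset.mul_sum]
        have hs : ∑ l, ((i l : ℕ) : ℝ) = ((a:ℝ) + 1) := by
          have := Finset.Nat.mem_antidiagonalTuple.mp hi
          rw [← Nat.cast_sum, this]
          push_cast
          ring
        rw [hs, Nat.factorial_succ]
        push_cast
        ring

lemma G_eq_zero {r : ℕ} (kf : Fin r → ℕ) (a : ℕ) (h : (∑ j, kf j) < a) (z : ℝ) :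
    G kf a z = 0 := by
  unfold G
  refine Finset.sum_eq_zero (fun i hi => ?_)
  have hs : ∑ j, i j = a := Finset.Nat.mem_antidiagonalTuple.mp hi
  have : ∃ j, kf j < i j := by
    by_contra hc
    push_neg at hc
    have := Finset.sum_le_sum (fun j (_ : j ∈ Finset.univ) => hc j)
    omega
  obtain ⟨j, hj⟩ := this
  have : P kf i z = 0 := by
    unfold P
    refine Finset.prod_eq_zero (Finset.mem_univ j) ?_
    exact c_neg (by omega) z
  rw [this, mul_zero]

lemma Phi_hasDerivAt {r : ℕ} (kf : Fin r → ℕ) (m : ℤ) (z : ℝ) :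
    HasDerivAt (fun z => ∑ a ∈ Finset.range ((∑ j, kf j) + 1),
        (-1:ℝ)^a * (G kf a z * c (m + a + 1) z))
      (G kf 0 z * c m z) z := by
  set N := ∑ j, kf j with hN
  have hterm : ∀ a ∈ Finset.range (N+1),
      HasDerivAt (fun z => (-1:ℝ)^a * (G kf a z * c (m + a + 1) z))
        ((-1:ℝ)^a * (G kf (a+1) z * c (m + a + 1) z + G kf a z * c (m + a) z)) z := by
    intro a _
    refine HasDerivAt.const_mul _ ?_
    have h1 := (G_hasDerivAt kf a z).mul (c_hasDerivAt (m + a + 1) z)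
    have h2 : (m + (a:ℤ) + 1) - 1 = m + a := by ring
    rw [h2] at h1
    exact h1
  have hsum := HasDerivAt.sum hterm
  simp only [Finset.sum_fn] at hsum
  refine hsum.congr_deriv ?_
  -- telescoping
  have hgen : ∀ a : ℕ,
      (-1:ℝ)^a * (G kf (a+1) z * c (m + a + 1) z + G kf a z * c (m + a) z)
      = (fun b => (-1:ℝ)^b * (G kf b z * c (m + b) z)) a
        - (fun b => (-1:ℝ)^b * (G kf b z * c (m + b) z)) (a+1) := by
    intro a
    simp only []
    push_cast
    ring_nf
  calc ∑ a ∈ Finset.range (N+1),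
        (-1:ℝ)^a * (G kf (a+1) z * c (m + a + 1) z + G kf a z * c (m + a) z)
      = ∑ a ∈ Finset.range (N+1),
        ((fun b => (-1:ℝ)^b * (G kf b z * c (m + b) z)) a
          - (fun b => (-1:ℝ)^b * (G kf b z * c (m + b) z)) (a+1)) := by
        exact Finset.sum_congr rfl (fun a _ => hgen a)
    _ = G kf 0 z * c m z := by
        rw [Finset.sum_range_sub']
        simp [G_eq_zero kf (N+1) (by omega) z]

lemma integral_G {r : ℕ} (kf : Fin r → ℕ) (m : ℤ) (x : ℝ) :
    ∫ z in (0:ℝ)..x, G kf 0 z * c m z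
      = ∑ a ∈ Finset.range ((∑ j, kf j) + 1), (-1:ℝ)^a *
          (G kf a x * c (m + a + 1) x - G kf a 0 * c (m + a + 1) 0) := by
  rw [intervalIntegral.integral_eq_sub_of_hasDerivAt
    (f := fun z => ∑ a ∈ Finset.range ((∑ j, kf j) + 1),
        (-1:ℝ)^a * (G kf a z * c (m + a + 1) z))
    (fun t _ => Phi_hasDerivAt kf m t)
    (((G_continuous kf 0).mul (c_continuous m)).intervalIntegrable 0 x)]
  rw [← Finset.sum_sub_distrib]
  exact Finset.sum_congr rfl (fun a _ => by ring)

lemma Ct_eq {r : ℕ} (kf : Fin r → ℕ) (v : ℤ) (hv : 0 ≤ v) (i : Fin r → ℕ) (x : ℝ) :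
    P kf i x * c v x - P kf i 0 * c v 0
      = Ct (Fin.snoc (fun j => (kf j : ℤ) - i j) v) x := by
  by_cases hle : ∀ j, i j ≤ kf j
  · have hpos : ∀ j : Fin (r+1), 0 ≤ (Fin.snoc (fun j => (kf j : ℤ) - i j) v : Fin (r+1) → ℤ) j := by
      intro j
      refine Fin.lastCases ?_ ?_ j
      · rw [Fin.snoc_last]; exact hv
      · intro j'
        rw [Fin.snoc_castSucc]
        have := hle j'
        omega
    rw [Ct, if_pos hpos]
    have hBx : ∀ y : ℝ, ∏ j : Fin (r+1),
        B ((Fin.snoc (fun j => (kf j : ℤ) - i j) v : Fin (r+1) → ℤ) j).toNat y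
        = (∏ j : Fin r, B (((kf j : ℤ) - i j)).toNat y) * B v.toNat y := by
      intro y
      rw [Fin.prod_univ_castSucc]
      simp [Fin.snoc_castSucc, Fin.snoc_last]
    have hF : ∏ j : Fin (r+1),
        (((Fin.snoc (fun j => (kf j : ℤ) - i j) v : Fin (r+1) → ℤ) j).toNat.factorial : ℝ)
        = (∏ j : Fin r, ((((kf j : ℤ) - i j)).toNat.factorial : ℝ)) * (v.toNat.factorial : ℝ) := by
      rw [Fin.prod_univ_castSucc]
      simp [Fin.snoc_castSucc, Fin.snoc_last]
    rw [hBx, hBx, hF]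
    have hP : ∀ y : ℝ, P kf i y
        = (∏ j : Fin r, B (((kf j : ℤ) - i j)).toNat y)
          / ∏ j : Fin r, ((((kf j : ℤ) - i j)).toNat.factorial : ℝ) := by
      intro y
      rw [P, ← Finset.prod_div_distrib]
      refine Finset.prod_congr rfl (fun j _ => ?_)
      exact c_nonneg (by have := hle j; omega) y
    rw [hP, hP, c_nonneg hv, c_nonneg hv]
    rw [div_mul_div_comm, div_mul_div_comm, div_sub_div_same]
  · push_neg at hle
    obtain ⟨j, hj⟩ := hle
    have hCt : Ct (Fin.snoc (fun j => (kf j : ℤ) - i j) v) x = 0 := by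
      rw [Ct, if_neg]
      push_neg
      refine ⟨j.castSucc, ?_⟩
      rw [Fin.snoc_castSucc]
      omega
    have hP : ∀ y : ℝ, P kf i y = 0 := by
      intro y
      rw [P]
      refine Finset.prod_eq_zero (Finset.mem_univ j) ?_
      exact c_neg (by omega) y
    rw [hP, hP, hCt]
    ring

lemma G_zero_eq {r : ℕ} (kf : Fin r → ℕ) (z : ℝ) :
    G kf 0 z = ∏ j, (B (kf j) z / ((kf j).factorial : ℝ)) := by
  rw [G, Finset.Nat.antidiagonalTuple_zero_right, Finset.sum_singleton]
  have h0 : (0 : Fin r → ℕ) ∈ Finset.Nat.antidiagonalTuple r 0 := by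
    rw [Finset.Nat.antidiagonalTuple_zero_right]; exact Finset.mem_singleton_self _
  rw [mult_cast _ h0]
  simp only [Pi.zero_apply, Nat.factorial_zero, Nat.cast_one, Finset.prod_const_one]
  rw [P]
  simp only [Nat.cast_zero, sub_zero, div_one, one_mul]
  refine Finset.prod_congr rfl (fun j _ => ?_)
  simp only [Pi.zero_apply, Nat.cast_zero, sub_zero]
  rw [c_nonneg (Int.natCast_nonneg _)]
  simp

/-- Main theorem: the case `r + 1 ≥ 1` factors, with `r` front indices `k ∘ castSucc`
and last index `k (Fin.last r)`. -/
theorem integral_prod_bernoulli_poly (r : ℕ) (k : Fin (r + 1) → ℕ) (x : ℝ) :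
    It k x =
      ∑ a ∈ Finset.range ((∑ j : Fin r, k j.castSucc) + 1), (-1 : ℝ) ^ a *
        ∑ i ∈ Finset.Nat.antidiagonalTuple r a,
          (Nat.multinomial Finset.univ i : ℝ) *
            Ct (Fin.snoc (fun j : Fin r => (k j.castSucc : ℤ) - i j)
              ((k (Fin.last r) : ℤ) + a + 1)) x := by
  set kf : Fin r → ℕ := fun j => k j.castSucc with hkf
  set m : ℤ := (k (Fin.last r) : ℤ) with hm
  have hIt : It k x = ∫ z in (0:ℝ)..x, G kf 0 z * c m z := by
    have hfun : ∀ z : ℝ, G kf 0 z * c m z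
        = (∏ j : Fin (r+1), B (k j) z) / ∏ j : Fin (r+1), ((k j).factorial : ℝ) := by
      intro z
      rw [G_zero_eq, c_nonneg (by rw [hm]; exact Int.natCast_nonneg _)]
      rw [Fin.prod_univ_castSucc (f := fun j => B (k j) z),
        Fin.prod_univ_castSucc (f := fun j => ((k j).factorial : ℝ))]
      rw [Finset.prod_div_distrib]
      rw [div_mul_div_comm]
      congr 1
    rw [It]
    rw [intervalIntegral.integral_congr (g := fun z =>
        (∏ j : Fin (r+1), B (k j) z) / ∏ j : Fin (r+1), ((k j).factorial : ℝ))
      (fun z _ => hfun z)]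
    rw [intervalIntegral.integral_div]
  rw [hIt, integral_G]
  refine Finset.sum_congr rfl (fun a ha => ?_)
  congr 1
  rw [G, G, Finset.sum_mul, Finset.sum_mul, ← Finset.sum_sub_distrib]
  refine Finset.sum_congr rfl (fun i _ => ?_)
  rw [mul_assoc, mul_assoc, ← mul_sub,
    Ct_eq kf (m + a + 1) (by rw [hm]; omega) i x]
end

section
/- For nonnegative integers k_1, k_2, k_3, k_4 with k_1 + k_2 + k_3 + k_4 even, writing B̃_n = B_n/n!, one has (1/(k_1!k_2!k_3!k_4!)) ∫₀¹ B_{k_1}(z)B_{k_2}(z)B_{k_3}(z)B_{k_4}(z) dz = 2 ∑_{a=0}^{k_1+k_2+k_3} (-1)^{a+1} B̃_{k_4+a+1} ∑_{i_1+i_2+i_3=a} binom(a; i_1,i_2,i_3) B̃_{k_1−i_1} B̃_{k_2−i_2} B̃_{k_3−i_3}, where terms with any negative index are zero. -/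
/-- `B̃_n = B_n / n!`, set to `0` for negative `n`. -/
noncomputable def Bt (n : ℤ) : ℝ :=
  if 0 ≤ n then B n.toNat 0 / n.toNat.factorial else 0

open Polynomial Finset

namespace BernAux

noncomputable def qn (k : ℕ) : ℝ[X] :=
  ((k.factorial : ℝ)⁻¹) • (Polynomial.bernoulli k).map (algebraMap ℚ ℝ)

noncomputable def q (n : ℤ) : ℝ[X] := if 0 ≤ n then qn n.toNat else 0

lemma deriv_qn_succ (k : ℕ) : derivative (qn (k+1)) = qn k := by
  have hmap : derivative ((Polynomial.bernoulli (k+1)).map (algebraMap ℚ ℝ))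
      = ((k:ℝ)+1) • (Polynomial.bernoulli k).map (algebraMap ℚ ℝ) := by
    rw [derivative_map, Polynomial.derivative_bernoulli_add_one]
    push_cast
    rw [Polynomial.map_mul]
    simp [smul_eq_C_mul]
  simp only [qn, derivative_smul, hmap, smul_smul]
  congr 1
  rw [Nat.factorial_succ]
  push_cast
  have h1 : ((k:ℝ)+1) ≠ 0 := by positivity
  have h2 : (k.factorial : ℝ) ≠ 0 := by positivity
  field_simp

lemma deriv_q (n : ℤ) : derivative (q n) = q (n-1) := by
  rcases lt_trichotomy n 0 with h | h | h
  · rw [q, if_neg (by omega), q, if_neg (by omega)]; simp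
  · subst h
    rw [q, if_pos le_rfl, q, if_neg (by omega)]
    simp [qn]
  · have h1 : (0:ℤ) ≤ n := le_of_lt h
    have h2 : n.toNat = (n-1).toNat + 1 := by omega
    rw [q, if_pos h1, h2, deriv_qn_succ, q, if_pos (by omega)]

lemma iter_deriv_q (n : ℤ) (j : ℕ) : derivative^[j] (q n) = q (n - j) := by
  induction j with
  | zero => simp
  | succ j ih =>
    rw [Function.iterate_succ_apply', ih, deriv_q]
    congr 1
    push_cast
    ring

lemma eval_zero_q (n : ℤ) : eval 0 (q n) = Bt n := by
  rw [q, Bt]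
  split
  · rw [qn, eval_smul, smul_eq_mul, eval_map, B, aeval_def, inv_mul_eq_div]
  · simp

lemma eval_one_q (n : ℤ) : eval 1 (q n) = (-1) ^ n.toNat * Bt n := by
  rw [q, Bt]
  split
  · rw [qn, eval_smul, smul_eq_mul]
    have h0 : eval 1 ((Polynomial.bernoulli n.toNat).map (algebraMap ℚ ℝ))
        = (-1) ^ n.toNat * B n.toNat 0 := by
      rw [Polynomial.eval_one_map, Polynomial.bernoulli_eval_one, bernoulli'_eq_bernoulli]
      rw [B, aeval_def, ← eval_map, Polynomial.eval_zero_map,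
        Polynomial.bernoulli_eval_zero]
      push_cast
      ring
    rw [h0]
    ring
  · simp

lemma ftc (R : ℝ[X]) : ∫ z in (0:ℝ)..1, eval z (derivative R) = eval 1 R - eval 0 R := by
  refine intervalIntegral.integral_eq_sub_of_hasDerivAt (fun x _ => R.hasDerivAt x) ?_
  exact ((derivative R).continuous).intervalIntegrable _ _

lemma pint (A B' : ℝ[X]) : IntervalIntegrable (fun z => eval z A * eval z B') MeasureTheory.volume (0:ℝ) 1 :=
  (A.continuous.mul B'.continuous).intervalIntegrable _ _

lemma step (P : ℝ[X]) (n : ℤ) :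
    ∫ z in (0:ℝ)..1, eval z P * eval z (q n)
      = (eval 1 P * eval 1 (q (n+1)) - eval 0 P * eval 0 (q (n+1)))
        - ∫ z in (0:ℝ)..1, eval z (derivative P) * eval z (q (n+1)) := by
  have hd : derivative (P * q (n+1)) = derivative P * q (n+1) + P * q n := by
    rw [derivative_mul, deriv_q]
    norm_num
  have h1 := ftc (P * q (n+1))
  rw [hd] at h1
  have h2 : ∫ z in (0:ℝ)..1, eval z (derivative P * q (n+1) + P * q n)
      = (∫ z in (0:ℝ)..1, eval z (derivative P) * eval z (q (n+1)))
        + ∫ z in (0:ℝ)..1, eval z P * eval z (q n) := by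
    rw [← intervalIntegral.integral_add (pint (derivative P) (q (n+1))) (pint P (q n))]
    apply intervalIntegral.integral_congr
    intro z _
    simp [eval_add, eval_mul]
  rw [h2, eval_mul, eval_mul] at h1
  linarith

lemma key (N : ℕ) : ∀ (P : ℝ[X]), P.natDegree ≤ N → ∀ n : ℤ,
    (∫ z in (0:ℝ)..1, eval z P * eval z (q n)) =
    ∑ a ∈ Finset.range (N+1), (-1:ℝ)^a *
      (eval 1 (derivative^[a] P) * eval 1 (q (n+a+1))
        - eval 0 (derivative^[a] P) * eval 0 (q (n+a+1))) := by
  induction N with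
  | zero =>
    intro P hP n
    have hD : derivative P = 0 := by
      rw [Polynomial.eq_C_of_natDegree_le_zero hP]
      simp
    rw [step P n, hD]
    simp
  | succ N ih =>
    intro P hP n
    have hD : (derivative P).natDegree ≤ N := by
      have := P.natDegree_derivative_le
      omega
    rw [step P n, ih _ hD (n+1)]
    conv_rhs => rw [Finset.sum_range_succ']
    have : ∀ a ∈ Finset.range (N+1),
        (-1:ℝ)^a * (eval 1 (derivative^[a] (derivative P)) * eval 1 (q (n+1+a+1))
          - eval 0 (derivative^[a] (derivative P)) * eval 0 (q (n+1+a+1)))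
        = -((-1:ℝ)^(a+1) * (eval 1 (derivative^[a+1] P) * eval 1 (q (n+(a+1:ℕ)+1))
          - eval 0 (derivative^[a+1] P) * eval 0 (q (n+(a+1:ℕ)+1)))) := by
      intro a _
      rw [Function.iterate_succ_apply]
      have harg : n + ((a+1:ℕ):ℤ) + 1 = n + 1 + a + 1 := by push_cast; ring
      rw [harg, pow_succ]
      ring
    rw [Finset.sum_congr rfl this, Finset.sum_neg_distrib]
    simp only [Function.iterate_zero_apply, pow_zero, Nat.cast_zero, add_zero, one_mul]
    ring

lemma mult3 (i0 i1 i2 : ℕ) :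
    Nat.multinomial Finset.univ ![i0,i1,i2]
      = (i0+i1+i2).choose i0 * (i1+i2).choose i1 := by
  have huniv : (Finset.univ : Finset (Fin 3)) = {0, 1, 2} := by decide
  rw [huniv, Nat.multinomial_insert (by decide), Nat.multinomial_insert (by decide),
    Nat.multinomial_singleton]
  simp only [Finset.sum_pair (by decide : (1 : Fin 3) ≠ 2), Finset.sum_singleton,
    Matrix.cons_val_zero, Matrix.cons_val_one, Matrix.head_cons, Matrix.cons_val_two,
    Matrix.tail_cons, mul_one, add_assoc]

lemma leibniz3 (m₁ m₂ m₃ : ℤ) (a : ℕ) :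
    derivative^[a] (q m₁ * q m₂ * q m₃)
      = ∑ i ∈ Finset.Nat.antidiagonalTuple 3 a,
          (Nat.multinomial Finset.univ i) •
            (q (m₁ - i 0) * q (m₂ - i 1) * q (m₃ - i 2)) := by
  have hstep : derivative^[a] (q m₁ * q m₂ * q m₃)
      = ∑ x ∈ (Finset.range (a+1)).sigma (fun k => Finset.range (k+1)),
          (a.choose x.1 * (x.1).choose x.2) •
            (q (m₁ - (a - x.1 : ℕ)) * (q (m₂ - (x.1 - x.2 : ℕ)) * q (m₃ - (x.2 : ℕ)))) := by
    rw [mul_assoc, Polynomial.iterate_derivative_mul, Finset.sum_sigma]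
    refine Finset.sum_congr rfl fun k hk => ?_
    rw [Polynomial.iterate_derivative_mul]
    simp only [iter_deriv_q, Finset.mul_sum, Finset.smul_sum, mul_smul_comm, smul_smul]
  rw [hstep]
  refine Finset.sum_nbij' (fun x => ![a - x.1, x.1 - x.2, x.2])
    (fun y => ⟨y 1 + y 2, y 2⟩) ?_ ?_ ?_ ?_ ?_
  · rintro ⟨k, j⟩ hx
    simp only [Finset.mem_sigma, Finset.mem_range] at hx
    rw [Finset.Nat.mem_antidiagonalTuple, Fin.sum_univ_three]
    simp only [Matrix.cons_val_zero, Matrix.cons_val_one, Matrix.head_cons,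
      Matrix.cons_val_two, Matrix.tail_cons]
    omega
  · intro y hy
    rw [Finset.Nat.mem_antidiagonalTuple, Fin.sum_univ_three] at hy
    simp only [Finset.mem_sigma, Finset.mem_range]
    omega
  · rintro ⟨k, j⟩ hx
    simp only [Finset.mem_sigma, Finset.mem_range] at hx
    simp only [Matrix.cons_val_zero, Matrix.cons_val_one, Matrix.head_cons,
      Matrix.cons_val_two, Matrix.tail_cons]
    ext <;> simp <;> omega
  · intro y hy
    rw [Finset.Nat.mem_antidiagonalTuple, Fin.sum_univ_three] at hy
    funext i
    fin_cases i <;> simp <;> omega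
  · rintro ⟨k, j⟩ hx
    simp only [Finset.mem_sigma, Finset.mem_range] at hx
    have hj : j ≤ k := by omega
    have hk : k ≤ a := by omega
    simp only [Matrix.cons_val_zero, Matrix.cons_val_one, Matrix.head_cons,
      Matrix.cons_val_two, Matrix.tail_cons]
    rw [mult3]
    have e1 : a - k + (k - j) + j = a := by omega
    have e2 : k - j + j = k := by omega
    rw [e1, e2, Nat.choose_symm hk, Nat.choose_symm hj, mul_assoc]

lemma Bt_neg (n : ℤ) (h : n < 0) : Bt n = 0 := if_neg (not_le.2 h)

lemma eval_one_prod3 (m₁ m₂ m₃ : ℤ) :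
    eval 1 (q m₁ * q m₂ * q m₃)
      = (-1)^(m₁.toNat + m₂.toNat + m₃.toNat) * (Bt m₁ * Bt m₂ * Bt m₃) := by
  simp only [eval_mul, eval_one_q, pow_add]
  ring

lemma bernoulli_natDegree_le (k : ℕ) : (Polynomial.bernoulli k).natDegree ≤ k := by
  rw [Polynomial.bernoulli]
  refine Polynomial.natDegree_sum_le_of_forall_le _ _ fun i hi => ?_
  exact le_trans (Polynomial.natDegree_monomial_le _) (by omega)

lemma natDegree_q_le (k : ℕ) : (q (k:ℤ)).natDegree ≤ k := by
  rw [q, if_pos (Int.natCast_nonneg k)]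
  unfold qn
  refine le_trans (Polynomial.natDegree_smul_le _ _)
    (le_trans Polynomial.natDegree_map_le ?_)
  simpa using bernoulli_natDegree_le k

lemma eval_q_nat (k : ℕ) (z : ℝ) : eval z (q (k:ℤ)) = (k.factorial : ℝ)⁻¹ * B k z := by
  rw [q, if_pos (Int.natCast_nonneg k)]
  simp only [Int.toNat_natCast, qn, eval_smul, smul_eq_mul, eval_map, B, aeval_def]

end BernAux

open BernAux in
theorem integral_prod_four_bernoulli_even (k₁ k₂ k₃ k₄ : ℕ)
    (h : Even (k₁ + k₂ + k₃ + k₄)) :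
    (∫ z in (0:ℝ)..1, B k₁ z * B k₂ z * B k₃ z * B k₄ z) /
        ((k₁.factorial : ℝ) * k₂.factorial * k₃.factorial * k₄.factorial) =
      2 * ∑ a ∈ Finset.range (k₁ + k₂ + k₃ + 1),
        (-1 : ℝ) ^ (a + 1) * Bt ((k₄ : ℤ) + a + 1) *
          ∑ i ∈ Finset.Nat.antidiagonalTuple 3 a,
            (Nat.multinomial Finset.univ i : ℝ) *
              (Bt ((k₁ : ℤ) - i 0) * Bt ((k₂ : ℤ) - i 1) * Bt ((k₃ : ℤ) - i 2)) := by
  have hf1 : (k₁.factorial : ℝ) ≠ 0 := by positivity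
  have hf2 : (k₂.factorial : ℝ) ≠ 0 := by positivity
  have hf3 : (k₃.factorial : ℝ) ≠ 0 := by positivity
  have hf4 : (k₄.factorial : ℝ) ≠ 0 := by positivity
  have hdeg : (q (k₁:ℤ) * q (k₂:ℤ) * q (k₃:ℤ)).natDegree ≤ k₁ + k₂ + k₃ := by
    have h1 := natDegree_q_le k₁
    have h2 := natDegree_q_le k₂
    have h3 := natDegree_q_le k₃
    have hd12 := Polynomial.natDegree_mul_le (p := q (k₁:ℤ)) (q := q (k₂:ℤ))
    have hd := Polynomial.natDegree_mul_le (p := q (k₁:ℤ) * q (k₂:ℤ)) (q := q (k₃:ℤ))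
    omega
  have hint : (∫ z in (0:ℝ)..1, B k₁ z * B k₂ z * B k₃ z * B k₄ z) /
        ((k₁.factorial : ℝ) * k₂.factorial * k₃.factorial * k₄.factorial)
      = ∫ z in (0:ℝ)..1, eval z (q (k₁:ℤ) * q (k₂:ℤ) * q (k₃:ℤ)) * eval z (q (k₄:ℤ)) := by
    rw [div_eq_mul_inv, ← intervalIntegral.integral_mul_const]
    refine intervalIntegral.integral_congr fun z _ => ?_
    simp only [eval_mul, eval_q_nat]
    field_simp
  have hE0 : ∀ a : ℕ, eval 0 (derivative^[a] (q (k₁:ℤ) * q (k₂:ℤ) * q (k₃:ℤ)))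
      = ∑ i ∈ Finset.Nat.antidiagonalTuple 3 a,
          (Nat.multinomial Finset.univ i : ℝ) *
            (Bt ((k₁ : ℤ) - i 0) * Bt ((k₂ : ℤ) - i 1) * Bt ((k₃ : ℤ) - i 2)) := by
    intro a
    rw [leibniz3, Polynomial.eval_finset_sum]
    refine Finset.sum_congr rfl fun i _ => ?_
    rw [Polynomial.eval_smul, nsmul_eq_mul]
    simp only [eval_mul, eval_zero_q]
  have hE1 : ∀ a : ℕ, eval 1 (derivative^[a] (q (k₁:ℤ) * q (k₂:ℤ) * q (k₃:ℤ)))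
      = (-1)^(k₁+k₂+k₃+a) * ∑ i ∈ Finset.Nat.antidiagonalTuple 3 a,
          (Nat.multinomial Finset.univ i : ℝ) *
            (Bt ((k₁ : ℤ) - i 0) * Bt ((k₂ : ℤ) - i 1) * Bt ((k₃ : ℤ) - i 2)) := by
    intro a
    rw [leibniz3, Polynomial.eval_finset_sum, Finset.mul_sum]
    refine Finset.sum_congr rfl fun i hi => ?_
    rw [Finset.Nat.mem_antidiagonalTuple, Fin.sum_univ_three] at hi
    rw [Polynomial.eval_smul, nsmul_eq_mul, eval_one_prod3]
    by_cases c1 : ((k₁:ℤ) - i 0) < 0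
    · rw [Bt_neg _ c1]; ring
    by_cases c2 : ((k₂:ℤ) - i 1) < 0
    · rw [Bt_neg _ c2]; ring
    by_cases c3 : ((k₃:ℤ) - i 2) < 0
    · rw [Bt_neg _ c3]; ring
    have he : ((k₁:ℤ) - i 0).toNat + ((k₂:ℤ) - i 1).toNat + ((k₃:ℤ) - i 2).toNat + 2*a
        = k₁+k₂+k₃+a := by omega
    have hpow : ((-1:ℝ))^(k₁+k₂+k₃+a)
        = (-1)^(((k₁:ℤ) - i 0).toNat + ((k₂:ℤ) - i 1).toNat + ((k₃:ℤ) - i 2).toNat) := by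
      rw [← he, pow_add, pow_mul]
      norm_num
    rw [hpow]
    ring
  rw [hint, key (k₁+k₂+k₃) _ hdeg (k₄:ℤ), Finset.mul_sum]
  refine Finset.sum_congr rfl fun a ha => ?_
  have ht : ((k₄:ℤ) + a + 1).toNat = k₄ + a + 1 := by omega
  rw [eval_one_q, eval_zero_q, ht, hE1 a, hE0 a]
  have hx : (-1:ℝ)^a * (-1)^a = 1 := by
    rw [← pow_add]
    exact Even.neg_one_pow ⟨a, rfl⟩
  have huv : (-1:ℝ)^(k₁+k₂+k₃) * (-1)^k₄ = 1 := by
    rw [← pow_add]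
    exact Even.neg_one_pow h
  set S := ∑ i ∈ Finset.Nat.antidiagonalTuple 3 a,
      (Nat.multinomial Finset.univ i : ℝ) *
        (Bt ((k₁ : ℤ) - i 0) * Bt ((k₂ : ℤ) - i 1) * Bt ((k₃ : ℤ) - i 2)) with hS
  set T := Bt ((k₄:ℤ) + a + 1) with hT
  simp only [pow_add, pow_succ, pow_zero]
  linear_combination (-((-1:ℝ)^a * (-1:ℝ)^(k₁+k₂+k₃) * (-1:ℝ)^k₄ * S * T)) * hx
    + (-((-1:ℝ)^a * S * T)) * huv
end

section
/- The integral from 0 to 1 of B_1(z)³·B_3(z) dz equals (3/4)·B_1²·B_4 + (1/20)·B_6 − (1/8)·B_4. -/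
lemma B1_eq (z : ℝ) : B 1 z = z - 1/2 := by
  simp [B, Polynomial.bernoulli, Finset.sum_range_succ, bernoulli]
  ring

lemma B3_eq (z : ℝ) : B 3 z = z^3 - 3/2*z^2 + 1/2*z := by
  simp [B, Polynomial.bernoulli, Finset.sum_range_succ, bernoulli]
  norm_num [bernoulli'_one, bernoulli'_two]
  ring

lemma B4_zero : B 4 0 = -1/30 := by
  norm_num [B, Polynomial.bernoulli, Finset.sum_range_succ, bernoulli, bernoulli'_one,
    bernoulli'_two]

lemma bern5 : bernoulli' 5 = 0 := by
  rw [bernoulli'_def]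
  norm_num [Finset.sum_range_succ, bernoulli'_two, bernoulli'_three, bernoulli'_four, Nat.choose]

lemma B6_zero : B 6 0 = 1/42 := by
  have h6 : bernoulli' 6 = 1/42 := by
    rw [bernoulli'_def]
    norm_num [Finset.sum_range_succ, bernoulli'_two, bernoulli'_three, bernoulli'_four, bern5,
      Nat.choose]
  norm_num [B, Polynomial.bernoulli, Finset.sum_range_succ, bernoulli, bernoulli'_two,
    bernoulli'_three, bernoulli'_four, bern5, h6]

theorem integral_B1_cubed_B3 :
    ∫ z in (0:ℝ)..1, (B 1 z) ^ 3 * B 3 z =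
      (3 / 4) * (B 1 0) ^ 2 * B 4 0 + (1 / 20) * B 6 0 - (1 / 8) * B 4 0 := by
  have hcong : ∫ z in (0:ℝ)..1, (B 1 z) ^ 3 * B 3 z
      = ∫ z in (0:ℝ)..1, (z^6 - 3*z^5 + 7/2*z^4 - 2*z^3 + 9/16*z^2 - 1/16*z) := by
    apply intervalIntegral.integral_congr
    intro z _
    simp only [B1_eq, B3_eq]; ring
  have key : ∀ z : ℝ, HasDerivAt
      (fun z : ℝ => z^7/7 - z^6/2 + 7*z^5/10 - z^4/2 + 3*z^3/16 - z^2/32)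
      (z^6 - 3*z^5 + 7/2*z^4 - 2*z^3 + 9/16*z^2 - 1/16*z) z := by
    intro z
    have h := (((((((hasDerivAt_pow 7 z).div_const 7).sub
      ((hasDerivAt_pow 6 z).div_const 2)).add
      (((hasDerivAt_pow 5 z).const_mul (7:ℝ)).div_const 10)).sub
      ((hasDerivAt_pow 4 z).div_const 2)).add
      (((hasDerivAt_pow 3 z).const_mul (3:ℝ)).div_const 16)).sub
      ((hasDerivAt_pow 2 z).div_const 32))
    convert h using 1
    norm_num
    all_goals first | rfl | ring
  rw [hcong, intervalIntegral.integral_eq_sub_of_hasDerivAt (fun z _ => key z)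
    ((by fun_prop : Continuous fun z : ℝ =>
      (z^6 - 3*z^5 + 7/2*z^4 - 2*z^3 + 9/16*z^2 - 1/16*z)).intervalIntegrable 0 1)]
  rw [B1_eq, B4_zero, B6_zero]
  norm_num
end

section
/- The integral from 0 to 1 of B_1(z)²·B_2(z)·B_4(z) dz equals −(1/15)·B_2·B_6 − (1/5)·B_1²·B_6 − (1/70)·B_8 + (1/30)·B_6. -/
lemma bern6 : bernoulli' 6 = 1/42 := by
  rw [bernoulli'_def 6]
  norm_num [Finset.sum_range_succ, Nat.choose, bernoulli'_zero, bernoulli'_one,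
    bernoulli'_two, bernoulli'_three, bernoulli'_four, bern5]

lemma bern7 : bernoulli' 7 = 0 := by
  rw [bernoulli'_def 7]
  norm_num [Finset.sum_range_succ, Nat.choose, bernoulli'_zero, bernoulli'_one,
    bernoulli'_two, bernoulli'_three, bernoulli'_four, bern5, bern6]

lemma bern8 : bernoulli' 8 = -1/30 := by
  rw [bernoulli'_def 8]
  norm_num [Finset.sum_range_succ, Nat.choose, bernoulli'_zero, bernoulli'_one,
    bernoulli'_two, bernoulli'_three, bernoulli'_four, bern5, bern6, bern7]

lemma bn2 : bernoulli 2 = 1/6 := by norm_num [bernoulli, bernoulli'_two]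
lemma bn3 : bernoulli 3 = 0 := by norm_num [bernoulli, bernoulli'_three]
lemma bn4 : bernoulli 4 = -1/30 := by norm_num [bernoulli, bernoulli'_four]
lemma bn6 : bernoulli 6 = 1/42 := by norm_num [bernoulli, bern6]
lemma bn8 : bernoulli 8 = -1/30 := by norm_num [bernoulli, bern8]

theorem integral_B1_sq_B2_B4 :
    ∫ z in (0:ℝ)..1, (B 1 z) ^ 2 * B 2 z * B 4 z =
      -(1 / 15) * B 2 0 * B 6 0 - (1 / 5) * (B 1 0) ^ 2 * B 6 0
        - (1 / 70) * B 8 0 + (1 / 30) * B 6 0 := by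
  have h1 : ∀ x : ℝ, B 1 x = x - 1/2 := by
    intro x
    simp [B, Polynomial.bernoulli, Finset.sum_range_succ]
    ring
  have h2 : ∀ x : ℝ, B 2 x = x^2 - x + 1/6 := by
    intro x
    simp [B, Polynomial.bernoulli, Finset.sum_range_succ, bn2]
    ring
  have h4 : ∀ x : ℝ, B 4 x = x^4 - 2*x^3 + x^2 - 1/30 := by
    intro x
    simp [B, Polynomial.bernoulli, Finset.sum_range_succ, bn2, bn3, bn4, Nat.choose]
    norm_num
    ring
  have h6 : B 6 0 = 1/42 := by
    simp [B, Polynomial.bernoulli, Finset.sum_range_succ, bn6]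
  have h8 : B 8 0 = -1/30 := by
    simp [B, Polynomial.bernoulli, Finset.sum_range_succ, bn8]
  set c : ℕ → ℝ := fun n =>
    ([-1/720, 1/72, -1/180, -13/30, 271/120, -21/4, 77/12, -4, 1] : List ℝ).getD n 0 with hc
  have key : ∀ z : ℝ, (B 1 z) ^ 2 * B 2 z * B 4 z = ∑ i ∈ Finset.range 9, c i * z ^ i := by
    intro z
    simp [h1, h2, h4, Finset.sum_range_succ, hc]
    ring
  simp_rw [key]
  rw [intervalIntegral.integral_finset_sum (f := fun i (z : ℝ) => c i * z ^ i) (fun i _ =>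
    ((continuous_const.mul (continuous_pow i)).intervalIntegrable 0 1))]
  simp only [intervalIntegral.integral_const_mul, integral_pow, Finset.sum_range_succ]
  rw [h1, h2, h6, h8]
  simp [hc]
  norm_num
end

section
/- For nonnegative integers k_1,…,k_r, real x, and any permutation σ of {1,…,r}, the quantity T_{k_1,…,k_r}(x) := ∑_{a=0}^{k_1+⋯+k_{r-1}} (-1)^a ∑_{i_1+⋯+i_{r-1}=a} binom(a; i_1,…,i_{r-1}) C̃_{k_1−i_1,…,k_{r-1}−i_{r-1}, k_r+a+1}(x) satisfies T_{k_1,…,k_r}(x) = T_{k_{σ(1)},…,k_{σ(r)}}(x). -/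
/-- The right-hand side `T_{k_1,…,k_{r+1}}(x)` of the main formula. -/
noncomputable def T {r : ℕ} (k : Fin (r + 1) → ℕ) (x : ℝ) : ℝ :=
  ∑ a ∈ Finset.range ((∑ j : Fin r, k j.castSucc) + 1), (-1 : ℝ) ^ a *
    ∑ i ∈ Finset.Nat.antidiagonalTuple r a,
      (Nat.multinomial Finset.univ i : ℝ) *
        Ct (Fin.snoc (fun j : Fin r => (k j.castSucc : ℤ) - i j)
          ((k (Fin.last r) : ℤ) + a + 1)) x


open Polynomial Finset

open Polynomial Finset

/-- Bernoulli polynomial over ℝ. -/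
noncomputable def bp (n : ℕ) : ℝ[X] := (Polynomial.bernoulli n).map (algebraMap ℚ ℝ)

/-- Normalized Bernoulli polynomial with integer index, zero for negative index. -/
noncomputable def g (n : ℤ) : ℝ[X] :=
  if 0 ≤ n then Polynomial.C ((n.toNat.factorial : ℝ)⁻¹) * bp n.toNat else 0

noncomputable def Pp {s : ℕ} (v : Fin s → ℤ) : ℝ[X] := ∏ j, g (v j)

lemma eval_bp (n : ℕ) (x : ℝ) : (bp n).eval x = B n x := by
  rw [bp, Polynomial.eval_map, B, Polynomial.aeval_def]

lemma Pp_eq_zero {s : ℕ} {v : Fin s → ℤ} (j : Fin s) (h : v j < 0) : Pp v = 0 :=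
  Finset.prod_eq_zero (Finset.mem_univ j) (by simp [g, not_le.2 h])

lemma deriv_g (n : ℤ) : derivative (g n) = g (n - 1) := by
  by_cases h1 : 1 ≤ n
  · have hn : n.toNat = (n - 1).toNat + 1 := by omega
    rw [g, g, if_pos (by omega : (0:ℤ) ≤ n), if_pos (by omega : (0:ℤ) ≤ n - 1), hn,
      derivative_C_mul, bp, Polynomial.derivative_map,
      Polynomial.derivative_bernoulli_add_one]
    set m := (n - 1).toNat
    rw [Polynomial.map_mul, Polynomial.map_add, Polynomial.map_natCast, Polynomial.map_one,
      ← bp, ← Polynomial.C_eq_natCast, ← Polynomial.C_1, ← Polynomial.C_add, ← mul_assoc,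
      ← Polynomial.C_mul]
    congr 1
    rw [Nat.factorial_succ]
    have hm : ((m:ℝ) + 1) ≠ 0 := by positivity
    have hf : ((m.factorial : ℝ)) ≠ 0 := by positivity
    push_cast
    field_simp
  · by_cases h0 : n = 0
    · subst h0
      have : bp 0 = 1 := by
        simp [bp, Polynomial.bernoulli_zero]
      simp [g, this]
    · rw [g, g, if_neg (by omega), if_neg (by omega)]
      simp
noncomputable def Ctp {s : ℕ} (v : Fin s → ℤ) : ℝ[X] := Pp v - Polynomial.C ((Pp v).eval 0)

lemma eval_g (n : ℤ) (x : ℝ) :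
    (g n).eval x = if 0 ≤ n then (n.toNat.factorial : ℝ)⁻¹ * B n.toNat x else 0 := by
  by_cases h : 0 ≤ n <;> simp [g, h, eval_bp, B]

lemma eval_Ctp {s : ℕ} (v : Fin s → ℤ) (x : ℝ) : (Ctp v).eval x = Ct v x := by
  have key : ∀ y : ℝ, (Pp v).eval y =
      if ∀ j, 0 ≤ v j then (∏ j, ((v j).toNat.factorial : ℝ))⁻¹ * ∏ j, B (v j).toNat y
      else 0 := by
    intro y
    by_cases h : ∀ j, 0 ≤ v j
    · rw [if_pos h, Pp, Polynomial.eval_prod]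
      rw [← Finset.prod_inv_distrib, ← Finset.prod_mul_distrib]
      refine Finset.prod_congr rfl fun j _ => ?_
      rw [eval_g, if_pos (h j)]
    · push_neg at h
      obtain ⟨j, hj⟩ := h
      rw [if_neg (by push_neg; exact ⟨j, hj⟩), Pp, Polynomial.eval_prod]
      refine Finset.prod_eq_zero (Finset.mem_univ j) ?_
      rw [eval_g, if_neg (not_le.2 hj)]
  rw [Ctp, Polynomial.eval_sub, Polynomial.eval_C, key, key, Ct]
  by_cases h : ∀ j, 0 ≤ v j
  · rw [if_pos h, if_pos h, if_pos h, div_eq_inv_mul, mul_sub]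
  · rw [if_neg h, if_neg h, if_neg h, sub_zero]

lemma eval_zero_Ctp {s : ℕ} (v : Fin s → ℤ) : (Ctp v).eval 0 = 0 := by
  simp [Ctp]

lemma deriv_Ctp {s : ℕ} (v : Fin s → ℤ) : derivative (Ctp v) = derivative (Pp v) := by
  simp [Ctp]

lemma derivative_finset_prod {ι : Type*} [DecidableEq ι] (s : Finset ι) (f : ι → ℝ[X]) :
    derivative (∏ i ∈ s, f i) = ∑ i ∈ s, (∏ j ∈ s.erase i, f j) * derivative (f i) := by
  induction s using Finset.induction with
  | empty => simp
  | insert a s' ha ih =>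
    rw [Finset.prod_insert ha, derivative_mul, ih, Finset.mul_sum, Finset.sum_insert ha,
      Finset.erase_insert ha]
    congr 1
    · rw [mul_comm]
    · refine Finset.sum_congr rfl fun i hi => ?_
      rw [Finset.erase_insert_of_ne (by rintro rfl; exact ha hi), Finset.prod_insert
        (fun h => ha (Finset.mem_of_mem_erase h))]
      ring

lemma deriv_Pp {s : ℕ} (v : Fin s → ℤ) :
    derivative (Pp v) = ∑ l, Pp (fun j => v j - if j = l then 1 else 0) := by
  rw [Pp, derivative_finset_prod]
  refine Finset.sum_congr rfl fun l _ => ?_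
  rw [deriv_g, Pp, ← Finset.mul_prod_erase _ _ (Finset.mem_univ l), if_pos rfl, mul_comm]
  congr 1
  refine Finset.prod_congr rfl fun j hj => ?_
  rw [if_neg (Finset.ne_of_mem_erase hj), sub_zero]

lemma Pp_snoc {s : ℕ} (m : Fin s → ℤ) (M : ℤ) : Pp (Fin.snoc m M) = Pp m * g M := by
  rw [Pp, Pp, Fin.prod_univ_castSucc]
  simp

lemma snoc_sub_castSucc {s : ℕ} (m : Fin s → ℤ) (M : ℤ) (l : Fin s) :
    (fun j => (Fin.snoc m M : Fin (s+1) → ℤ) j - if j = l.castSucc then 1 else 0 : Fin (s+1) → ℤ)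
      = Fin.snoc (fun j => m j - if j = l then 1 else 0) M := by
  funext j
  induction j using Fin.lastCases with
  | last => simp [(Fin.castSucc_lt_last l).ne']
  | cast j => simp [Fin.castSucc_inj]

lemma snoc_sub_last {s : ℕ} (m : Fin s → ℤ) (M : ℤ) :
    (fun j => (Fin.snoc m M : Fin (s+1) → ℤ) j - if j = Fin.last s then 1 else 0 : Fin (s+1) → ℤ)
      = Fin.snoc m (M - 1) := by
  funext j
  induction j using Fin.lastCases with
  | last => simp
  | cast j => simp [(Fin.castSucc_lt_last j).ne]
lemma prod_fact_pos {s : ℕ} (i : Fin s → ℕ) : (0:ℝ) < ∏ j, ((i j).factorial : ℝ) :=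
  Finset.prod_pos fun j _ => by positivity

lemma multinomial_cast {s : ℕ} (i : Fin s → ℕ) :
    (Nat.multinomial Finset.univ i : ℝ)
      = ((∑ j, i j).factorial : ℝ) / ∏ j, ((i j).factorial : ℝ) := by
  rw [eq_div_iff (prod_fact_pos i).ne', mul_comm, ← Nat.cast_prod, ← Nat.cast_mul,
    Nat.multinomial_spec]

lemma update_eq {s : ℕ} (i : Fin s → ℕ) (l : Fin s) :
    (fun j => i j - if j = l then 1 else 0) = Function.update i l (i l - 1) := by
  funext j
  by_cases h : j = l
  · subst h; simp
  · simp [h]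

lemma fact_pred {m : ℕ} (h : m ≠ 0) : (m.factorial : ℝ) = m * ((m - 1).factorial : ℝ) := by
  obtain ⟨p, rfl⟩ : ∃ p, m = p + 1 := ⟨m - 1, by omega⟩
  simp [Nat.factorial_succ]

lemma pascal {s : ℕ} (i : Fin s → ℕ) (hne : ∑ j, i j ≠ 0) :
    ∑ l, (if i l ≠ 0 then
        ((Nat.multinomial Finset.univ (fun j => i j - if j = l then 1 else 0) : ℝ)) else 0)
      = (Nat.multinomial Finset.univ i : ℝ) := by
  set n := ∑ j, i j with hn
  have key : ∀ l : Fin s, (if i l ≠ 0 then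
      ((Nat.multinomial Finset.univ (fun j => i j - if j = l then 1 else 0) : ℝ)) else 0)
      = ((n-1).factorial : ℝ) * (i l) / ∏ j, ((i j).factorial : ℝ) := by
    intro l
    by_cases h : i l = 0
    · simp [h]
    · rw [if_pos h, update_eq, multinomial_cast]
      have h1 : ∑ j, Function.update i l (i l - 1) j = n - 1 := by
        rw [Finset.sum_update_of_mem (Finset.mem_univ l), ← Finset.erase_eq]
        have h2 := Finset.add_sum_erase Finset.univ i (Finset.mem_univ l)
        omega
      have h2 : (∏ j, ((Function.update i l (i l - 1) j).factorial : ℝ))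
          = ((i l - 1).factorial : ℝ) * ∏ j ∈ Finset.univ.erase l, ((i j).factorial : ℝ) := by
        have he : (fun j => ((Function.update i l (i l - 1) j).factorial : ℝ))
            = Function.update (fun j => ((i j).factorial : ℝ)) l ((i l - 1).factorial : ℝ) := by
          funext j
          by_cases hj : j = l
          · subst hj; simp
          · simp [hj]
        rw [he, Finset.prod_update_of_mem (Finset.mem_univ l), ← Finset.erase_eq]
      have h3 : (∏ j, ((i j).factorial : ℝ))
          = ((i l).factorial : ℝ) * ∏ j ∈ Finset.univ.erase l, ((i j).factorial : ℝ) :=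
        (Finset.mul_prod_erase _ _ (Finset.mem_univ l)).symm
      have h4 : ((i l).factorial : ℝ) = (i l) * ((i l - 1).factorial : ℝ) := fact_pred h
      have hEpos : (0:ℝ) < ∏ j ∈ Finset.univ.erase l, ((i j).factorial : ℝ) :=
        Finset.prod_pos fun j _ => by positivity
      have hfpos : (0:ℝ) < ((i l - 1).factorial : ℝ) := by positivity
      rw [h1, h2, h3, h4]
      rw [div_eq_div_iff (by positivity) (by positivity)]
      ring
  rw [Finset.sum_congr rfl fun l _ => key l]
  have : ∑ l, ((n-1).factorial : ℝ) * (i l) / ∏ j, ((i j).factorial : ℝ)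
      = ((n-1).factorial : ℝ) * (n : ℝ) / ∏ j, ((i j).factorial : ℝ) := by
    rw [← Finset.sum_div, ← Finset.mul_sum, ← Nat.cast_sum, ← hn]
  rw [this, multinomial_cast, ← hn]
  congr 1
  rw [fact_pred hne]
  ring

lemma reindex {s a : ℕ} (F : (Fin s → ℕ) → Fin s → ℝ[X]) :
    ∑ i ∈ Finset.Nat.antidiagonalTuple s a, ∑ l, F (fun j => i j + if j = l then 1 else 0) l
      = ∑ i ∈ Finset.Nat.antidiagonalTuple s (a+1), ∑ l, (if i l ≠ 0 then F i l else 0) := by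
  rw [← Finset.sum_product', ← Finset.sum_product']
  rw [show (∑ p ∈ Finset.Nat.antidiagonalTuple s (a+1) ×ˢ Finset.univ,
      if p.1 p.2 ≠ 0 then F p.1 p.2 else 0)
    = ∑ p ∈ (Finset.Nat.antidiagonalTuple s (a+1) ×ˢ Finset.univ).filter
        (fun p => p.1 p.2 ≠ 0), F p.1 p.2 from (Finset.sum_filter _ _).symm]
  refine Finset.sum_nbij' (fun p => (fun j => p.1 j + if j = p.2 then 1 else 0, p.2))
    (fun p => (fun j => p.1 j - if j = p.2 then 1 else 0, p.2)) ?_ ?_ ?_ ?_ ?_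
  · rintro ⟨i, l⟩ hp
    rw [Finset.mem_product, Finset.Nat.mem_antidiagonalTuple] at hp
    rw [Finset.mem_filter, Finset.mem_product, Finset.Nat.mem_antidiagonalTuple]
    refine ⟨⟨?_, Finset.mem_univ _⟩, by simp⟩
    rw [Finset.sum_add_distrib, hp.1, Finset.sum_ite_eq' Finset.univ l (fun _ => 1)]
    simp
  · rintro ⟨i, l⟩ hp
    rw [Finset.mem_filter, Finset.mem_product, Finset.Nat.mem_antidiagonalTuple] at hp
    rw [Finset.mem_product, Finset.Nat.mem_antidiagonalTuple]
    refine ⟨?_, Finset.mem_univ _⟩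
    rw [update_eq, Finset.sum_update_of_mem (Finset.mem_univ l), ← Finset.erase_eq]
    have h2 := Finset.add_sum_erase Finset.univ i (Finset.mem_univ l)
    have h3 := hp.1.1
    have h4 : i l ≠ 0 := hp.2
    dsimp only at *
    omega
  · rintro ⟨i, l⟩ _
    refine Prod.ext (funext fun j => ?_) rfl
    by_cases hj : j = l <;> simp [hj]
  · rintro ⟨i, l⟩ hp
    rw [Finset.mem_filter] at hp
    have h4 : i l ≠ 0 := hp.2
    refine Prod.ext (funext fun j => ?_) rfl
    by_cases hj : j = l
    · subst hj; simp; omega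
    · simp [hj]
  · rintro ⟨i, l⟩ _
    rfl
noncomputable def Ap {r : ℕ} (kc : Fin r → ℕ) (kl : ℕ) (b : ℕ) : ℝ[X] :=
  Polynomial.C ((-1 : ℝ) ^ b) *
    ∑ i ∈ Finset.Nat.antidiagonalTuple r b,
      Polynomial.C ((Nat.multinomial Finset.univ i : ℝ)) *
        Pp (Fin.snoc (fun j : Fin r => (kc j : ℤ) - i j) ((kl : ℤ) + b))

lemma main_step {r : ℕ} (a : ℕ) (kc : Fin r → ℕ) (M : ℤ) :
    ∑ i ∈ Finset.Nat.antidiagonalTuple r a,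
        Polynomial.C ((Nat.multinomial Finset.univ i : ℝ)) *
          ∑ l : Fin r, Pp (Fin.snoc (fun j => (kc j : ℤ) - i j - if j = l then 1 else 0) M)
      = ∑ i ∈ Finset.Nat.antidiagonalTuple r (a + 1),
        Polynomial.C ((Nat.multinomial Finset.univ i : ℝ)) *
          Pp (Fin.snoc (fun j => (kc j : ℤ) - i j) M) := by
  have h := reindex (s := r) (a := a) (fun i' l =>
    Polynomial.C ((Nat.multinomial Finset.univ (fun j => i' j - if j = l then 1 else 0) : ℝ)) *
      Pp (Fin.snoc (fun j => (kc j : ℤ) - i' j) M))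
  refine Eq.trans ?_ (Eq.trans h ?_)
  · refine Finset.sum_congr rfl fun i _ => ?_
    rw [Finset.mul_sum]
    refine Finset.sum_congr rfl fun l _ => ?_
    dsimp only
    have e1 : (fun j => (i j + if j = l then 1 else 0) - if j = l then 1 else 0) = i :=
      funext fun j => by by_cases h : j = l <;> simp [h]
    have e2 : (fun j => (kc j : ℤ) - ((i j + if j = l then 1 else 0 : ℕ) : ℤ))
        = (fun j => (kc j : ℤ) - i j - if j = l then 1 else 0) :=
      funext fun j => by by_cases h : j = l <;> simp [h] <;> push_cast <;> ring
    rw [e1, e2]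
  · refine Finset.sum_congr rfl fun i' hi' => ?_
    have hsum : ∑ j, i' j = a + 1 := Finset.Nat.mem_antidiagonalTuple.mp hi'
    have e3 : ∀ l : Fin r, (if i' l ≠ 0 then
        Polynomial.C ((Nat.multinomial Finset.univ (fun j => i' j - if j = l then 1 else 0) : ℝ)) *
          Pp (Fin.snoc (fun j => (kc j : ℤ) - i' j) M) else 0)
        = Polynomial.C (if i' l ≠ 0 then
            ((Nat.multinomial Finset.univ (fun j => i' j - if j = l then 1 else 0) : ℝ)) else 0) *
          Pp (Fin.snoc (fun j => (kc j : ℤ) - i' j) M) := fun l => by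
      by_cases h : i' l = 0 <;> simp [h]
    rw [Finset.sum_congr rfl fun l _ => e3 l, ← Finset.sum_mul, ← map_sum,
      pascal i' (by omega)]

lemma step_s18 {r : ℕ} (kc : Fin r → ℕ) (kl : ℕ) (a : ℕ) :
    Polynomial.C ((-1 : ℝ) ^ a) *
      ∑ i ∈ Finset.Nat.antidiagonalTuple r a,
        Polynomial.C ((Nat.multinomial Finset.univ i : ℝ)) *
          Polynomial.derivative
            (Ctp (Fin.snoc (fun j : Fin r => (kc j : ℤ) - i j) ((kl : ℤ) + a + 1)))
      = Ap kc kl a - Ap kc kl (a + 1) := by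
  have hM : ∀ i : Fin r → ℕ,
      Polynomial.derivative (Ctp (Fin.snoc (fun j : Fin r => (kc j : ℤ) - i j) ((kl : ℤ) + a + 1)))
      = (∑ l : Fin r,
          Pp (Fin.snoc (fun j : Fin r => (kc j : ℤ) - i j - if j = l then 1 else 0)
            ((kl : ℤ) + a + 1)))
        + Pp (Fin.snoc (fun j : Fin r => (kc j : ℤ) - i j) ((kl : ℤ) + a)) := by
    intro i
    rw [deriv_Ctp, deriv_Pp, Fin.sum_univ_castSucc]
    congr 1
    · refine Finset.sum_congr rfl fun l' _ => ?_
      rw [snoc_sub_castSucc]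
    · rw [snoc_sub_last]
      have : ((kl : ℤ) + a + 1) - 1 = (kl : ℤ) + a := by ring
      rw [this]
  simp only [hM, mul_add, Finset.sum_add_distrib]
  have hfirst : Polynomial.C ((-1 : ℝ) ^ a) *
      ∑ i ∈ Finset.Nat.antidiagonalTuple r a,
        Polynomial.C ((Nat.multinomial Finset.univ i : ℝ)) *
          ∑ l : Fin r, Pp (Fin.snoc (fun j : Fin r => (kc j : ℤ) - i j - if j = l then 1 else 0)
            ((kl : ℤ) + a + 1))
      = - Ap kc kl (a + 1) := by
    rw [main_step a kc ((kl : ℤ) + a + 1), Ap]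
    have h1 : ((-1 : ℝ)) ^ (a + 1) = -((-1) ^ a) := by rw [pow_succ]; ring
    have h2 : ((kl : ℤ) + ((a : ℕ) + 1 : ℕ)) = (kl : ℤ) + a + 1 := by push_cast; ring
    rw [h1, h2, map_neg, neg_mul, neg_neg]
  have hlast : Polynomial.C ((-1 : ℝ) ^ a) *
      ∑ i ∈ Finset.Nat.antidiagonalTuple r a,
        Polynomial.C ((Nat.multinomial Finset.univ i : ℝ)) *
          Pp (Fin.snoc (fun j : Fin r => (kc j : ℤ) - i j) ((kl : ℤ) + a))
      = Ap kc kl a := rfl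
  rw [hfirst, hlast, sub_eq_add_neg, add_comm]

lemma Ap_top {r : ℕ} (kc : Fin r → ℕ) (kl : ℕ) :
    Ap kc kl ((∑ j, kc j) + 1) = 0 := by
  rw [Ap]
  rw [show (∑ i ∈ Finset.Nat.antidiagonalTuple r ((∑ j, kc j) + 1),
      Polynomial.C ((Nat.multinomial Finset.univ i : ℝ)) *
        Pp (Fin.snoc (fun j : Fin r => (kc j : ℤ) - i j) ((kl : ℤ) + ((∑ j, kc j) + 1 : ℕ)))) = 0
    from Finset.sum_eq_zero fun i hi => ?_, mul_zero]
  have hsum : ∑ j, i j = (∑ j, kc j) + 1 := Finset.Nat.mem_antidiagonalTuple.mp hi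
  have hex : ∃ j, kc j < i j := by
    by_contra hcon
    push_neg at hcon
    have := Finset.sum_le_sum (fun j (_ : j ∈ Finset.univ) => hcon j)
    omega
  obtain ⟨j, hj⟩ := hex
  rw [Pp_eq_zero (Fin.castSucc j) (by rw [Fin.snoc_castSucc]; omega), mul_zero]

lemma Ap_zero {r : ℕ} (kc : Fin r → ℕ) (kl : ℕ) :
    Ap kc kl 0 = (∏ j, g ((kc j : ℤ))) * g ((kl : ℤ)) := by
  rw [Ap, Finset.Nat.antidiagonalTuple_zero_right, Finset.sum_singleton]
  have hm : Nat.multinomial Finset.univ (0 : Fin r → ℕ) = 1 := by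
    have := Nat.multinomial_spec (Finset.univ : Finset (Fin r)) (0 : Fin r → ℕ)
    simpa using this
  have he : (Fin.snoc (fun j : Fin r => (kc j : ℤ) - (0 : Fin r → ℕ) j) ((kl : ℤ) + (0:ℕ))
        : Fin (r+1) → ℤ)
      = (Fin.snoc (fun j : Fin r => (kc j : ℤ)) (kl : ℤ) : Fin (r+1) → ℤ) := by
    funext j
    induction j using Fin.lastCases with
    | last => simp
    | cast j => simp
  rw [hm, he, Pp_snoc]
  simp [Pp]
noncomputable def Tp {r : ℕ} (k : Fin (r + 1) → ℕ) : ℝ[X] :=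
  ∑ a ∈ Finset.range ((∑ j : Fin r, k j.castSucc) + 1), Polynomial.C ((-1 : ℝ) ^ a) *
    ∑ i ∈ Finset.Nat.antidiagonalTuple r a,
      Polynomial.C ((Nat.multinomial Finset.univ i : ℝ)) *
        Ctp (Fin.snoc (fun j : Fin r => (k j.castSucc : ℤ) - i j)
          ((k (Fin.last r) : ℤ) + a + 1))

lemma eval_Tp {r : ℕ} (k : Fin (r + 1) → ℕ) (x : ℝ) : (Tp k).eval x = T k x := by
  rw [Tp, T, Polynomial.eval_finset_sum]
  refine Finset.sum_congr rfl fun a _ => ?_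
  rw [Polynomial.eval_mul, Polynomial.eval_C, Polynomial.eval_finset_sum]
  congr 1
  refine Finset.sum_congr rfl fun i _ => ?_
  rw [Polynomial.eval_mul, Polynomial.eval_C, eval_Ctp]

lemma eval_zero_Tp {r : ℕ} (k : Fin (r + 1) → ℕ) : (Tp k).eval 0 = 0 := by
  rw [Tp, Polynomial.eval_finset_sum]
  refine Finset.sum_eq_zero fun a _ => ?_
  rw [Polynomial.eval_mul, Polynomial.eval_finset_sum]
  rw [Finset.sum_eq_zero fun i _ => by
    rw [Polynomial.eval_mul, eval_zero_Ctp, mul_zero], mul_zero]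

lemma deriv_Tp {r : ℕ} (k : Fin (r + 1) → ℕ) :
    Polynomial.derivative (Tp k) = ∏ j, g ((k j : ℤ)) := by
  rw [Tp, derivative_sum]
  simp only [derivative_C_mul, derivative_sum]
  have h1 : ∑ a ∈ Finset.range ((∑ j : Fin r, k j.castSucc) + 1), Polynomial.C ((-1 : ℝ) ^ a) *
      ∑ i ∈ Finset.Nat.antidiagonalTuple r a,
        Polynomial.C ((Nat.multinomial Finset.univ i : ℝ)) *
          Polynomial.derivative (Ctp (Fin.snoc (fun j : Fin r => (k j.castSucc : ℤ) - i j)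
            ((k (Fin.last r) : ℤ) + a + 1)))
      = ∑ a ∈ Finset.range ((∑ j : Fin r, k j.castSucc) + 1),
          (Ap (fun j => k j.castSucc) (k (Fin.last r)) a
            - Ap (fun j => k j.castSucc) (k (Fin.last r)) (a + 1)) :=
    Finset.sum_congr rfl fun a _ => step_s18 (fun j => k j.castSucc) (k (Fin.last r)) a
  rw [h1, Finset.sum_range_sub' (fun b => Ap (fun j => k j.castSucc) (k (Fin.last r)) b),
    Ap_top, sub_zero, Ap_zero]
  rw [← Fin.prod_univ_castSucc (fun j => g ((k j : ℤ)))]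

theorem Tp_perm (r : ℕ) (k : Fin (r + 1) → ℕ) (σ : Equiv.Perm (Fin (r + 1))) :
    Tp k = Tp (k ∘ σ) := by
  have hd : Polynomial.derivative (Tp k - Tp (k ∘ σ)) = 0 := by
    rw [derivative_sub, deriv_Tp, deriv_Tp, sub_eq_zero]
    exact (Equiv.prod_comp σ fun j => g ((k j : ℤ))).symm
  have hC := Polynomial.eq_C_of_derivative_eq_zero hd
  have h0 : (Tp k - Tp (k ∘ σ)).coeff 0 = 0 := by
    rw [Polynomial.coeff_zero_eq_eval_zero, Polynomial.eval_sub, eval_zero_Tp, eval_zero_Tp,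
      sub_zero]
  rw [h0, map_zero, sub_eq_zero] at hC
  exact hC

theorem T_perm_invariant (r : ℕ) (k : Fin (r + 1) → ℕ)
    (σ : Equiv.Perm (Fin (r + 1))) (x : ℝ) :
    T k x = T (k ∘ σ) x := by
  rw [← eval_Tp, ← eval_Tp, Tp_perm r k σ]
end
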